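/- The family p^{LR}_{l,r} = 3·C(l+r, l)·∫₀¹ (1-a)³ · aˡ⁺ʳ/(1+a)^{l+r+1} da, indexed by nonnegative integers l, r, is a probability distribution: ∑_{l≥0} ∑_{r≥0} p^{LR}_{l,r} = 1. -/

import Mathlib

noncomputable def pLR (l r : ℕ) : ℝ :=
  3 * (Nat.choose (l + r) l : ℝ) *
    ∫ a in (0:ℝ)..1, (1 - a)^3 * a^(l + r) / (1 + a)^(l + r + 1)

open MeasureTheory Set

noncomputable def fLR (p : ℕ × ℕ) (a : ℝ) : ENNReal :=
  ENNReal.ofReal (3 * (Nat.choose (p.1 + p.2) p.1 : ℝ) *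
    ((1 - a)^(3:ℕ) * a^(p.1 + p.2) / (1 + a)^(p.1 + p.2 + 1)))

noncomputable def LLR (p : ℕ × ℕ) : ENNReal := ∫⁻ a in Ioc (0:ℝ) 1, fLR p a

lemma fLR_meas (p : ℕ × ℕ) : Measurable (fLR p) := by
  apply ENNReal.measurable_ofReal.comp
  fun_prop

lemma fLR_tsum {a : ℝ} (ha : a ∈ Ioo (0:ℝ) 1) :
    ∑' q : ℕ × ℕ, fLR q a = ENNReal.ofReal (3 * (1 - a)^2) := by
  obtain ⟨ha0, ha1⟩ := ha
  have hp : (0:ℝ) < 1 + a := by linarith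
  have hm : (0:ℝ) < 1 - a := by linarith
  set X : ENNReal := ENNReal.ofReal (a / (1 + a)) with hX
  set K : ENNReal := ENNReal.ofReal (3 * (1 - a)^3 / (1 + a)) with hK
  have hq : ∀ q : ℕ × ℕ, fLR q a
      = K * (((q.1 + q.2).choose q.1 : ENNReal) * X ^ (q.1 + q.2)) := by
    intro q
    have hre : 3 * ((q.1 + q.2).choose q.1 : ℝ) *
        ((1 - a)^(3:ℕ) * a^(q.1 + q.2) / (1 + a)^(q.1 + q.2 + 1))
        = (3 * (1 - a)^3 / (1 + a)) * (((q.1 + q.2).choose q.1 : ℝ) * (a / (1 + a))^(q.1 + q.2)) := by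
      rw [div_pow]
      field_simp
      ring
    rw [fLR, hre, ENNReal.ofReal_mul (by positivity), ENNReal.ofReal_mul (by positivity),
      ENNReal.ofReal_pow (by positivity), ENNReal.ofReal_natCast]
  have hS : ∑' q : ℕ × ℕ, (((q.1 + q.2).choose q.1 : ENNReal) * X ^ (q.1 + q.2))
      = (1 - 2 * X)⁻¹ := by
    set g : ℕ × ℕ → ENNReal := fun q => ((q.1 + q.2).choose q.1 : ENNReal) * X ^ (q.1 + q.2) with hg
    calc ∑' q : ℕ × ℕ, g q
        = ∑' σ : Σ n : ℕ, (Finset.HasAntidiagonal.antidiagonal n : Finset (ℕ × ℕ)),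
            g (Finset.HasAntidiagonal.sigmaAntidiagonalEquivProd σ) :=
          (Equiv.tsum_eq Finset.HasAntidiagonal.sigmaAntidiagonalEquivProd g).symm
      _ = ∑' (n : ℕ), ∑' (y : (Finset.HasAntidiagonal.antidiagonal n : Finset (ℕ × ℕ))), g y.1 :=
          ENNReal.tsum_sigma' _
      _ = ∑' (n : ℕ), ∑ q ∈ Finset.HasAntidiagonal.antidiagonal n, g q :=
          tsum_congr fun n => Finset.tsum_subtype _ g
      _ = ∑' (n : ℕ), (2 * X) ^ n := by
          refine tsum_congr fun n => ?_
          rw [Finset.Nat.sum_antidiagonal_eq_sum_range_succ_mk]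
          have : ∀ k ∈ Finset.range (n + 1), g (k, n - k) = ((n.choose k : ENNReal)) * X ^ n := by
            intro k hk
            have hkn : k ≤ n := Nat.lt_succ_iff.mp (Finset.mem_range.mp hk)
            simp [hg, Nat.add_sub_cancel' hkn]
          rw [Finset.sum_congr rfl this, ← Finset.sum_mul, mul_pow]
          congr 1
          rw [← Nat.cast_sum, Nat.sum_range_choose]
          push_cast
          ring
      _ = (1 - 2 * X)⁻¹ := ENNReal.tsum_geometric _
  have h2X : 2 * X = ENNReal.ofReal (2 * (a / (1 + a))) := by
    rw [ENNReal.ofReal_mul (by norm_num), ENNReal.ofReal_ofNat]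
  have h1sub : (1 : ENNReal) - 2 * X = ENNReal.ofReal ((1 - a) / (1 + a)) := by
    rw [h2X, ← ENNReal.ofReal_one, ← ENNReal.ofReal_sub _ (by positivity)]
    congr 1
    field_simp
    ring
  rw [tsum_congr hq, ENNReal.tsum_mul_left, hS, h1sub,
    ← ENNReal.ofReal_inv_of_pos (by positivity), hK, ← ENNReal.ofReal_mul (by positivity)]
  congr 1
  field_simp


lemma pLR_eq (l r : ℕ) : pLR l r = (LLR (l, r)).toReal := by
  have h1 : pLR l r = ∫ a in (0:ℝ)..1,
      3 * (Nat.choose (l + r) l : ℝ) * ((1 - a)^3 * a^(l + r) / (1 + a)^(l + r + 1)) := by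
    rw [pLR, ← intervalIntegral.integral_const_mul]
  rw [h1, intervalIntegral.integral_of_le (by norm_num : (0:ℝ) ≤ 1)]
  rw [integral_eq_lintegral_of_nonneg_ae]
  · rfl
  · rw [Filter.EventuallyLE, ae_restrict_iff' measurableSet_Ioc]
    filter_upwards with a ha
    have h1 : 0 < a := ha.1
    have h2 : a ≤ 1 := ha.2
    have : (0:ℝ) < 1 + a := by linarith
    have : (0:ℝ) ≤ 1 - a := by linarith
    positivity
  · apply Measurable.aestronglyMeasurable
    fun_prop

lemma LLR_tsum_eq : ∑' p : ℕ × ℕ, LLR p = 1 := by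
  have h1 : ∑' p : ℕ × ℕ, LLR p = ∫⁻ a in Ioc (0:ℝ) 1, ∑' p : ℕ × ℕ, fLR p a :=
    (lintegral_tsum fun p => (fLR_meas p).aemeasurable).symm
  rw [h1, ← Measure.restrict_congr_set Ioo_ae_eq_Ioc,
    setLIntegral_congr_fun measurableSet_Ioo
      (fun a (ha : a ∈ Ioo (0:ℝ) 1) => fLR_tsum ha)]
  have hint : IntegrableOn (fun a : ℝ => 3 * (1 - a)^2) (Ioo 0 1) := by
    exact (Continuous.integrableOn_Ioc (by fun_prop)).mono_set Ioo_subset_Ioc_self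
  rw [← ofReal_integral_eq_lintegral_ofReal hint
      (ae_of_all _ fun a => by positivity)]
  have hval : ∫ a in Ioo (0:ℝ) 1, 3 * (1 - a)^2 = 1 := by
    rw [← integral_Ioc_eq_integral_Ioo, ← intervalIntegral.integral_of_le (by norm_num : (0:ℝ) ≤ 1)]
    have : ∀ a : ℝ, 3 * (1 - a)^2 = 3 * a^2 - 6 * a + 3 := fun a => by ring
    simp_rw [this]
    have hi : ∀ c : ℝ, ∀ n : ℕ, IntervalIntegrable (fun x : ℝ => c * x ^ n) volume 0 1 :=
      fun c n => Continuous.intervalIntegrable (by fun_prop) 0 1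
    rw [intervalIntegral.integral_add ((hi 3 2).sub (by simpa using hi 6 1))
        (Continuous.intervalIntegrable (continuous_const : Continuous fun _ : ℝ => (3:ℝ)) 0 1),
      intervalIntegral.integral_sub (hi 3 2) (by simpa using hi 6 1),
      intervalIntegral.integral_const_mul, intervalIntegral.integral_const_mul,
      integral_pow, integral_id]
    norm_num
  rw [hval, ENNReal.ofReal_one]


theorem stit_pLR_prob_dist :
    (∑' l : ℕ, ∑' r : ℕ, pLR l r) = 1 := by
  have hprod : ∑' l : ℕ, ∑' r : ℕ, LLR (l, r) = 1 := by
    rw [← ENNReal.tsum_prod]; exact LLR_tsum_eq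
  have hfin : ∀ l r : ℕ, LLR (l, r) ≠ ⊤ := by
    intro l r
    have h := ENNReal.le_tsum (f := fun p : ℕ × ℕ => LLR p) (l, r)
    rw [LLR_tsum_eq] at h
    exact ne_top_of_le_ne_top ENNReal.one_ne_top h
  have hinner : ∀ l : ℕ, ∑' r : ℕ, LLR (l, r) ≠ ⊤ := by
    intro l
    have h := ENNReal.le_tsum (f := fun l : ℕ => ∑' r : ℕ, LLR (l, r)) l
    rw [hprod] at h
    exact ne_top_of_le_ne_top ENNReal.one_ne_top h
  calc ∑' l : ℕ, ∑' r : ℕ, pLR l r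
      = ∑' l : ℕ, ∑' r : ℕ, (LLR (l, r)).toReal := by simp_rw [pLR_eq]
    _ = ∑' l : ℕ, (∑' r : ℕ, LLR (l, r)).toReal :=
        tsum_congr fun l => (ENNReal.tsum_toReal_eq (hfin l)).symm
    _ = (∑' l : ℕ, ∑' r : ℕ, LLR (l, r)).toReal := (ENNReal.tsum_toReal_eq hinner).symm
    _ = 1 := by rw [hprod]; rfl
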